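/- For every c ∈ ℕ (c > 0) and every d ∈ ℤ, the Diophantine equation c·x − c·y − d·z = 0 is partition regular on ℕ: for every finite coloring of ℕ there exist x, y, z ∈ ℕ of the same color with c·x − c·y − d·z = 0. -/
import Mathlib

open Filter

/-- Finitary van der Waerden, by compactness from `exists_mono_homothetic_copy`. -/
lemma vdW_finitary (L r : ℕ) :
    ∃ W : ℕ, ∀ C : ℕ → Fin (r + 1),
      ∃ b t : ℕ, 0 < b ∧ 0 < t ∧ b + L * t ≤ W ∧ ∀ j ≤ L, C (b + j * t) = C b := by
  by_contra h
  push_neg at h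
  choose D hD using h
  -- ultrafilter limit coloring
  set U : Ultrafilter ℕ := Filter.hyperfilter ℕ with hU
  have hlim : ∀ n : ℕ, ∃ v : Fin (r + 1), {W | D W n = v} ∈ U := by
    intro n
    obtain ⟨v, hv⟩ := (U.map fun W => D W n).eq_pure_of_finite
    exact ⟨v, by
      have : {v} ∈ (U.map fun W => D W n) := by rw [hv]; exact Filter.mem_pure.2 rfl
      simpa [Ultrafilter.mem_map, Set.preimage, Set.mem_singleton_iff] using this⟩
  choose C hC using hlim
  obtain ⟨a, ha, bb, c, hmono⟩ :=
    Combinatorics.exists_mono_homothetic_copy (Finset.range (L + 1))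
      (fun n => C (n + 1))
  set b' : ℕ := bb + 1 with hb'
  have hAP : ∀ j ≤ L, C (b' + j * a) = c := by
    intro j hj
    have := hmono j (Finset.mem_range.2 (Nat.lt_succ_of_le hj))
    simpa [hb', smul_eq_mul, mul_comm, add_assoc, add_comm, add_left_comm] using this
  have hbig : {W : ℕ | b' + L * a ≤ W} ∈ U :=
    Nat.hyperfilter_le_atTop (Filter.mem_atTop _)
  have hagree : {W : ℕ | ∀ j ≤ L, D W (b' + j * a) = C (b' + j * a)} ∈ U := by
    have h2 : {W : ℕ | ∀ j ∈ Finset.range (L + 1), D W (b' + j * a) = C (b' + j * a)} ∈ U := by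
      rw [show {W : ℕ | ∀ j ∈ Finset.range (L + 1), D W (b' + j * a) = C (b' + j * a)}
          = ⋂ j ∈ Finset.range (L + 1), {W | D W (b' + j * a) = C (b' + j * a)} by
        ext W; simp]
      exact (Finset.range (L + 1)).iInter_mem_sets.2 fun j _ => hC _
    filter_upwards [h2] with W hW j hj
    exact hW j (Finset.mem_range.2 (Nat.lt_succ_of_le hj))
  have hmem := U.toFilter.inter_sets hbig hagree
  obtain ⟨W, hW1, hW2⟩ := Filter.nonempty_of_mem hmem
  obtain ⟨j, hjL, hne⟩ := hD W b' a (by omega) ha hW1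
  apply hne
  have e0 : D W b' = C b' := by simpa using hW2 0 (Nat.zero_le _)
  rw [hW2 j hjL, e0, hAP j hjL]
  exact ((by simpa using hAP 0 (Nat.zero_le L) : C b' = c)).symm

/-- Key finitary lemma: bound for monochromatic `{a, a + p*m, q*m}` for colorings
using at most `i` colors on an initial segment. -/
lemma key_finitary (p q : ℕ) (hp : 0 < p) (hq : 0 < q) (r : ℕ) :
    ∀ i : ℕ, ∃ N : ℕ, 0 < N ∧ ∀ (s : Finset (Fin (r + 1))), s.card ≤ i →
      ∀ C : ℕ → Fin (r + 1), (∀ n, 0 < n → n ≤ N → C n ∈ s) →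
      ∃ a m : ℕ, 0 < a ∧ 0 < m ∧ a + p * m ≤ N ∧ q * m ≤ N ∧
        C a = C (a + p * m) ∧ C a = C (q * m) := by
  intro i
  induction i with
  | zero =>
    refine ⟨1, one_pos, fun s hs C hC => ?_⟩
    rw [Nat.le_zero, Finset.card_eq_zero] at hs
    exact absurd (hC 1 one_pos le_rfl) (by simp [hs])
  | succ i IH =>
    obtain ⟨N, hN, IH⟩ := IH
    obtain ⟨W, hW⟩ := vdW_finitary (p * q * N) r
    have hq1 : 1 ≤ q := hq
    have hN1 : 1 ≤ N := hN
    refine ⟨q * W * N, ?_, fun s hs C hC => ?_⟩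
    · obtain ⟨b, t, hb, ht, hbt, _⟩ := hW (fun _ => 0)
      have hWpos : 0 < W := lt_of_lt_of_le hb (le_trans (Nat.le_add_right _ _) hbt)
      positivity
    obtain ⟨b, t, hb, ht, hbt, hAP⟩ := hW C
    have htW : t ≤ W := by
      have hL : 0 < p * q * N := by positivity
      have h1 : 1 * t ≤ p * q * N * t := Nat.mul_le_mul hL le_rfl
      omega
    have hbW : b ≤ W := by omega
    have hWN : W ≤ q * W * N :=
      calc W = 1 * W * 1 := by ring
        _ ≤ q * W * N := Nat.mul_le_mul (Nat.mul_le_mul hq1 le_rfl) hN1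
    have hqtN : ∀ x, x ≤ N → q * t * x ≤ q * W * N := fun x hx =>
      Nat.mul_le_mul (Nat.mul_le_mul le_rfl htW) hx
    set k := C b with hk
    have hks : k ∈ s := hC b hb (le_trans hbW hWN)
    by_cases hcase : ∃ j, 0 < j ∧ j ≤ N ∧ C (q * t * j) = k
    · obtain ⟨j, hj0, hjN, hjk⟩ := hcase
      have hpj : p * j ≤ p * q * N := by
        have : j ≤ q * N := le_trans hjN (by
          calc N = 1 * N := (one_mul N).symm
            _ ≤ q * N := Nat.mul_le_mul hq1 le_rfl)
        calc p * j ≤ p * (q * N) := Nat.mul_le_mul le_rfl this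
          _ = p * q * N := (mul_assoc p q N).symm
      refine ⟨b, t * j, hb, by positivity, ?_, ?_, ?_, ?_⟩
      · have h1 : p * (t * j) = (p * j) * t := by ring
        have h2 : (p * j) * t ≤ (p * q * N) * t := Nat.mul_le_mul hpj le_rfl
        omega
      · calc q * (t * j) = q * t * j := by ring
          _ ≤ q * W * N := hqtN j hjN
      · have h1 : b + p * (t * j) = b + (p * j) * t := by ring
        rw [h1, hAP (p * j) hpj]
      · have h1 : q * (t * j) = q * t * j := by ring
        rw [h1, hjk]
    · push_neg at hcase
      have hsub : ∀ n, 0 < n → n ≤ N → C (q * t * n) ∈ s.erase k := by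
        intro n hn hnN
        exact Finset.mem_erase.2 ⟨hcase n hn hnN, hC _ (by positivity) (hqtN n hnN)⟩
      have hcard : (s.erase k).card ≤ i := by
        have := Finset.card_erase_of_mem hks
        omega
      obtain ⟨a', m', ha', hm', hb1, hb2, hc1, hc2⟩ :=
        IH (s.erase k) hcard (fun j => C (q * t * j)) hsub
      refine ⟨q * t * a', q * t * m', by positivity, by positivity, ?_, ?_, ?_, ?_⟩
      · calc q * t * a' + p * (q * t * m') = q * t * (a' + p * m') := by ring
          _ ≤ q * W * N := hqtN _ hb1
      · calc q * (q * t * m') = q * t * (q * m') := by ring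
          _ ≤ q * W * N := hqtN _ hb2
      · have h1 : q * t * a' + p * (q * t * m') = q * t * (a' + p * m') := by ring
        rw [h1]; exact hc1
      · have h1 : q * (q * t * m') = q * t * (q * m') := by ring
        rw [h1]; exact hc2

/-- Infinitary version. -/
lemma key_infinitary (p q : ℕ) (hp : 0 < p) (hq : 0 < q) (r : ℕ) (C : ℕ → Fin (r + 1)) :
    ∃ a m : ℕ, 0 < a ∧ 0 < m ∧ C a = C (a + p * m) ∧ C a = C (q * m) := by
  obtain ⟨N, hN, h⟩ := key_finitary p q hp hq r (r + 1)
  obtain ⟨a, m, ha, hm, _, _, h1, h2⟩ :=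
    h Finset.univ (by simp) C (fun n _ _ => Finset.mem_univ _)
  exact ⟨a, m, ha, hm, h1, h2⟩

/-- For every `c > 0` and every `d ∈ ℤ`, the equation `c·x - c·y - d·z = 0` is
partition regular on the positive integers. -/
theorem eq_cx_sub_cy_sub_dz_partition_regular (c : ℕ) (hc : 0 < c) (d : ℤ)
    (r : ℕ) (C : ℕ → Fin r) :
    ∃ x y z : ℕ, 0 < x ∧ 0 < y ∧ 0 < z ∧
      C x = C y ∧ C y = C z ∧
      (c : ℤ) * x - (c : ℤ) * y - d * z = 0 := by
  obtain _ | r := r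
  · exact (C 1).elim0
  rcases lt_trichotomy d 0 with hd | hd | hd
  · -- d < 0 : x = a, y = a + p*m, z = c*m with p = (-d).toNat
    set p : ℕ := (-d).toNat with hp
    have hp0 : 0 < p := by omega
    have hpd : (p : ℤ) = -d := Int.toNat_of_nonneg (by omega)
    obtain ⟨a, m, ha, hm, h1, h2⟩ := key_infinitary p c hp0 hc r C
    refine ⟨a, a + p * m, c * m, ha, by positivity, by positivity, h1, ?_, ?_⟩
    · rw [← h1, ← h2]
    · push_cast
      rw [show ((p : ℤ) * m) = -d * m by rw [hpd]]
      ring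
  · exact ⟨1, 1, 1, one_pos, one_pos, one_pos, rfl, rfl, by subst hd; ring⟩
  · -- d > 0 : x = a + p*m, y = a, z = c*m with p = d.toNat
    set p : ℕ := d.toNat with hp
    have hp0 : 0 < p := by omega
    have hpd : (p : ℤ) = d := Int.toNat_of_nonneg (by omega)
    obtain ⟨a, m, ha, hm, h1, h2⟩ := key_infinitary p c hp0 hc r C
    refine ⟨a + p * m, a, c * m, by positivity, ha, by positivity, h1.symm, h2, ?_⟩
    push_cast
    rw [show ((p : ℤ) * m) = d * m by rw [hpd]]
    ring
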